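/- Let b ≥ 2 be an integer and let M = { b^j · a_i : 1 ≤ i ≤ n, j ≥ 1 } ⊆ A_n be the place-notation macro set. Then for every integer s ≥ 1 the expansion function satisfies b^{s/(n(b-1)) − 1} ≤ f_{G'}(s) ≤ n·b · b^{s/(n(b-1))}. In particular f_{G'}(s) = Θ(b^{s/(n(b-1))}). Moreover the macro set has logarithmic density: the number of macros of G-length at most r is n·⌊log_b r⌋. -/

import Mathlib

lemma dsum_pow (b : ℕ) (hb : 2 ≤ b) (j : ℕ) : (Nat.digits b (b ^ j)).sum = 1 := by
  have hb1 : 1 < b := by omega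
  induction j with
  | zero =>
    rw [pow_zero, Nat.digits_def' hb1 one_pos, Nat.mod_eq_of_lt hb1,
      Nat.div_eq_of_lt hb1]
    simp
  | succ j ih =>
    have hpos : 0 < b ^ (j+1) := Nat.pow_pos (by omega)
    rw [Nat.digits_def' hb1 hpos]
    have h1 : b ^ (j+1) % b = 0 := by
      simp [pow_succ, Nat.mul_mod_left]
    have h2 : b ^ (j+1) / b = b ^ j := by
      rw [pow_succ, Nat.mul_div_cancel _ (by omega : 0 < b)]
    simp [h1, h2, ih]

lemma dsum_subadd (b : ℕ) (hb : 2 ≤ b) (x y : ℕ) :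
    (Nat.digits b (x + y)).sum ≤ (Nat.digits b x).sum + (Nat.digits b y).sum := by
  have hb1 : 1 < b := by omega
  have hb0 : 0 < b := by omega
  have hone : (Nat.digits b 1).sum = 1 := by simpa using dsum_pow b hb 0
  suffices H : ∀ N x y : ℕ, x + y ≤ N →
      (Nat.digits b (x + y)).sum ≤ (Nat.digits b x).sum + (Nat.digits b y).sum from
    H (x + y) x y le_rfl
  intro N
  induction N with
  | zero =>
    intro x y h
    have hx : x = 0 := by omega
    have hy : y = 0 := by omega
    simp [hx, hy]
  | succ N ihN =>
    intro x y hN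
    rcases Nat.eq_zero_or_pos x with hx | hx
    · simp [hx]
    rcases Nat.eq_zero_or_pos y with hy | hy
    · simp [hy]
    have hpos : 0 < x + y := by omega
    rw [Nat.digits_def' hb1 hpos, Nat.digits_def' hb1 hx, Nat.digits_def' hb1 hy]
    simp only [List.sum_cons]
    have hxd : x / b < x := Nat.div_lt_self hx hb1
    have hyd : y / b < y := Nat.div_lt_self hy hb1
    have hadd := Nat.add_div (a := x) (b := y) hb0
    have hmod : (x + y) % b = (x % b + y % b) % b := Nat.add_mod x y b
    have hxb := Nat.mod_lt x hb0
    have hyb := Nat.mod_lt y hb0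
    rcases Nat.lt_or_ge (x % b + y % b) b with hc | hc
    · have hm : (x + y) % b = x % b + y % b := by rw [hmod, Nat.mod_eq_of_lt hc]
      have hd : (x + y) / b = x / b + y / b := by
        rw [hadd]; simp [Nat.not_le.mpr hc]
      rw [hm, hd]
      have := ihN (x / b) (y / b) (by omega)
      omega
    · have hm : (x + y) % b = x % b + y % b - b := by
        rw [hmod]
        rw [Nat.mod_eq_sub_mod hc, Nat.mod_eq_of_lt (by omega)]
      have hd : (x + y) / b = x / b + y / b + 1 := by
        rw [hadd]; simp [hc]
      rw [hm, hd]
      have h1 : (Nat.digits b (x / b + (y / b + 1))).sum ≤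
          (Nat.digits b (x / b)).sum + (Nat.digits b (y / b + 1)).sum :=
        ihN (x / b) (y / b + 1) (by omega)
      have h2 : (Nat.digits b (y / b + 1)).sum ≤
          (Nat.digits b (y / b)).sum + (Nat.digits b 1).sum :=
        ihN (y / b) 1 (by omega)
      have : x / b + (y / b + 1) = x / b + y / b + 1 := by ring
      rw [this] at h1
      omega

lemma dsum_le_self (b : ℕ) (hb : 2 ≤ b) (m : ℕ) : (Nat.digits b m).sum ≤ m := by
  have hone : (Nat.digits b 1).sum = 1 := by simpa using dsum_pow b hb 0
  induction m with
  | zero => simp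
  | succ m ih =>
    calc (Nat.digits b (m + 1)).sum ≤ (Nat.digits b m).sum + (Nat.digits b 1).sum :=
          dsum_subadd b hb m 1
      _ ≤ m + 1 := by omega

lemma dsum_le_of_le_pow (b : ℕ) (hb : 2 ≤ b) (q m : ℕ) (hq : 1 ≤ q) (hm : m ≤ b ^ q) :
    (Nat.digits b m).sum ≤ (b - 1) * q := by
  have hb1 : 1 < b := by omega
  rcases Nat.eq_zero_or_pos m with h0 | h0
  · simp [h0]
  rcases eq_or_lt_of_le hm with he | hlt
  · rw [he, dsum_pow b hb q]
    calc 1 ≤ (b-1) * 1 := by omega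
      _ ≤ (b-1) * q := Nat.mul_le_mul_left _ hq
  · have hlen : (Nat.digits b m).length ≤ q := by
      rw [Nat.digits_len b m hb1 (by omega)]
      have : Nat.log b m < q := Nat.log_lt_of_lt_pow (by omega) hlt
      omega
    calc (Nat.digits b m).sum ≤ (Nat.digits b m).length * (b - 1) := by
          apply List.sum_le_card_nsmul
          intro x hx
          have := Nat.digits_lt_base hb1 hx
          omega
      _ ≤ q * (b - 1) := Nat.mul_le_mul_right _ hlen
      _ = (b - 1) * q := Nat.mul_comm _ _

lemma dsum_pred_pow (b : ℕ) (hb : 2 ≤ b) (m : ℕ) :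
    (Nat.digits b (b ^ m - 1)).sum = (b - 1) * m := by
  have hb1 : 1 < b := by omega
  induction m with
  | zero => simp
  | succ m ih =>
    have hbm : 1 ≤ b ^ m := Nat.one_le_pow _ _ (by omega)
    have hb2 : b ≤ b ^ (m+1) := by
      calc b = b ^ 1 := (pow_one b).symm
        _ ≤ b ^ (m+1) := Nat.pow_le_pow_right (by omega) (by omega)
    have hpos : 0 < b ^ (m + 1) - 1 := by omega
    have key : b ^ (m + 1) - 1 = b * (b ^ m - 1) + (b - 1) := by
      have : b ^ (m+1) = b * b ^ m := by ring
      rw [this]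
      have h2 : b * (b ^ m - 1) = b * b ^ m - b := by
        rw [Nat.mul_sub, mul_one]
      have h3 : b ≤ b * b ^ m := Nat.le_mul_of_pos_right b (by omega)
      omega
    rw [Nat.digits_def' hb1 hpos, key]
    have hmod : (b * (b ^ m - 1) + (b - 1)) % b = b - 1 := by
      rw [Nat.mul_add_mod b (b ^ m - 1) (b - 1), Nat.mod_eq_of_lt (by omega)]
    have hdiv : (b * (b ^ m - 1) + (b - 1)) / b = b ^ m - 1 := by
      rw [Nat.mul_add_div (by omega) (b ^ m - 1) (b - 1), Nat.div_eq_of_lt (by omega)]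
      omega
    rw [hmod, hdiv]
    simp only [List.sum_cons, ih]
    ring

lemma rep_exists (b : ℕ) (hb : 2 ≤ b) (m : ℕ) :
    ∃ l : Multiset ℕ, (∀ x ∈ l, ∃ j : ℕ, x = b ^ j) ∧ l.sum = m ∧
      l.card = (Nat.digits b m).sum := by
  have hb1 : 1 < b := by omega
  induction m using Nat.strong_induction_on with
  | _ m ih =>
    rcases Nat.eq_zero_or_pos m with h0 | h0
    · exact ⟨0, by simp [h0]⟩
    obtain ⟨l', hl'mem, hl'sum, hl'card⟩ := ih (m / b) (Nat.div_lt_self h0 hb1)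
    refine ⟨l'.map (fun x => b * x) + Multiset.replicate (m % b) 1, ?_, ?_, ?_⟩
    · intro x hx
      rcases Multiset.mem_add.mp hx with hx | hx
      · obtain ⟨y, hy, rfl⟩ := Multiset.mem_map.mp hx
        obtain ⟨j, rfl⟩ := hl'mem y hy
        exact ⟨j + 1, by ring⟩
      · rw [Multiset.eq_of_mem_replicate hx]
        exact ⟨0, (pow_zero b).symm⟩
    · rw [Multiset.sum_add, Multiset.sum_replicate, smul_eq_mul, mul_one,
        Multiset.sum_map_mul_left]
      simp only [Multiset.map_id', hl'sum]
      exact Nat.div_add_mod m b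
    · rw [Multiset.card_add, Multiset.card_map, Multiset.card_replicate, hl'card,
        Nat.digits_def' hb1 h0]
      simp [Nat.add_comm]



open scoped ENNReal BigOperators

/-- The length of an element of the free abelian monoid `A_n = ℕ^n` with respect to the
standard generators `G = {a_1, …, a_n}`: the sum of its coordinates. -/
def glen {n : ℕ} (w : Fin n → ℕ) : ℕ := ∑ j, w j

/-- The standard generating set `G` of `A_n = ℕ^n`: the standard basis vectors. -/
def gens (n : ℕ) : Set (Fin n → ℕ) := {w | ∃ i : Fin n, w = fun t => if t = i then 1 else 0}

/-- The length of `w` with respect to a generating set `S`: the minimum number of elements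
of `S` (with repetition) summing to `w`; `⊤` if `w` is not representable. -/
noncomputable def slen {n : ℕ} (S : Set (Fin n → ℕ)) (w : Fin n → ℕ) : ℕ∞ :=
  sInf {k : ℕ∞ | ∃ l : Multiset (Fin n → ℕ), (∀ x ∈ l, x ∈ S) ∧ l.sum = w ∧ (l.card : ℕ∞) = k}

/-- The expansion function `f_{G'}(s) = sup { r ∈ ℕ : B_G(r) ⊆ B_{G'}(s) }`, valued in
`ℝ≥0∞` (so that `⊤` means the ball inclusion holds for every radius `r`). -/
noncomputable def expansion {n : ℕ} (S : Set (Fin n → ℕ)) (s : ℕ) : ℝ≥0∞ :=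
  sSup {x : ℝ≥0∞ | ∃ r : ℕ, x = (r : ℝ≥0∞) ∧ ∀ w : Fin n → ℕ, glen w ≤ r → slen S w ≤ (s : ℕ∞)}

lemma msum_sum {α β : Type*} [AddCommMonoid β] (s : Finset α) (f : α → Multiset β) :
    (∑ i ∈ s, f i).sum = ∑ i ∈ s, (f i).sum := by
  induction s using Finset.cons_induction with
  | empty => simp
  | cons a t ha ih => simp [Finset.sum_cons, Multiset.sum_add, ih]

lemma mcard_sum {α β : Type*} (s : Finset α) (f : α → Multiset β) :
    Multiset.card (∑ i ∈ s, f i) = ∑ i ∈ s, Multiset.card (f i) := by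
  induction s using Finset.cons_induction with
  | empty => simp
  | cons a t ha ih => simp [Finset.sum_cons, ih]

lemma map_single_sum {n : ℕ} (i : Fin n) (l : Multiset ℕ) :
    (l.map (fun x => Pi.single (M := fun _ : Fin n => ℕ) i x)).sum = Pi.single i l.sum := by
  induction l using Multiset.induction_on with
  | empty => simp
  | cons a l ih => simp [ih, Pi.single_add]

/-- Upper bound: `slen` is at most the total digit sum. -/
lemma slen_le_dsum (n b : ℕ) (hb : 2 ≤ b) (M : Set (Fin n → ℕ))
    (hM : M = {w | ∃ i : Fin n, ∃ j : ℕ, 1 ≤ j ∧ w = fun t => if t = i then b ^ j else 0})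
    (w : Fin n → ℕ) :
    slen (gens n ∪ M) w ≤ ((∑ i, (Nat.digits b (w i)).sum : ℕ) : ℕ∞) := by
  choose l hmem hsum hcard using fun i : Fin n => rep_exists b hb (w i)
  set L : Multiset (Fin n → ℕ) :=
    ∑ i : Fin n, (l i).map (fun x => Pi.single (M := fun _ : Fin n => ℕ) i x) with hL
  apply sInf_le
  refine ⟨L, ?_, ?_, ?_⟩
  · intro x hx
    rw [hL, Multiset.mem_sum] at hx
    obtain ⟨i, -, hx⟩ := hx
    obtain ⟨c, hc, rfl⟩ := Multiset.mem_map.mp hx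
    obtain ⟨j, rfl⟩ := hmem i c hc
    have hfun : Pi.single (M := fun _ : Fin n => ℕ) i (b ^ j)
        = fun t => if t = i then b ^ j else 0 := by
      funext t; simp [Pi.single_apply]
    rcases Nat.eq_zero_or_pos j with hj | hj
    · left
      refine ⟨i, ?_⟩
      rw [hfun, hj]
      simp
    · right
      rw [hM]
      exact ⟨i, j, hj, hfun⟩
  · rw [hL, msum_sum]
    simp only [map_single_sum, hsum]
    exact Finset.univ_sum_single w
  · rw [hL, mcard_sum]
    simp only [Multiset.card_map, hcard]

/-- Lower bound: any representation has at least the total digit sum many terms. -/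
lemma dsum_le_slen (n b : ℕ) (hb : 2 ≤ b) (M : Set (Fin n → ℕ))
    (hM : M = {w | ∃ i : Fin n, ∃ j : ℕ, 1 ≤ j ∧ w = fun t => if t = i then b ^ j else 0})
    (w : Fin n → ℕ) :
    ((∑ i, (Nat.digits b (w i)).sum : ℕ) : ℕ∞) ≤ slen (gens n ∪ M) w := by
  apply le_sInf
  rintro k ⟨l, hmem, rfl, rfl⟩
  norm_cast
  induction l using Multiset.induction_on with
  | empty => simp
  | cons a l ih =>
    have ha : ∃ i : Fin n, ∃ j : ℕ, a = fun t => if t = i then b ^ j else 0 := by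
      rcases hmem a (Multiset.mem_cons_self a l) with h | h
      · obtain ⟨i, hi⟩ := h
        exact ⟨i, 0, by simpa using hi⟩
      · rw [hM] at h
        obtain ⟨i, j, -, hj⟩ := h
        exact ⟨i, j, hj⟩
    obtain ⟨i, j, rfl⟩ := ha
    have hrec := ih (fun x hx => hmem x (Multiset.mem_cons_of_mem hx))
    rw [Multiset.sum_cons, Multiset.card_cons]
    have hstep : ∀ t : Fin n,
        (Nat.digits b ((((fun t => if t = i then b ^ j else 0) + l.sum)) t)).sum ≤
          (Nat.digits b (l.sum t)).sum + (if t = i then 1 else 0) := by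
      intro t
      by_cases ht : t = i
      · subst ht
        simp only [Pi.add_apply, if_pos rfl]
        calc (Nat.digits b (b ^ j + l.sum t)).sum
            ≤ (Nat.digits b (b ^ j)).sum + (Nat.digits b (l.sum t)).sum :=
              dsum_subadd b hb _ _
          _ = (Nat.digits b (l.sum t)).sum + 1 := by rw [dsum_pow b hb]; ring
      · simp [Pi.add_apply, ht]
    calc ∑ t, (Nat.digits b ((((fun t => if t = i then b ^ j else 0) + l.sum)) t)).sum
        ≤ ∑ t, ((Nat.digits b (l.sum t)).sum + (if t = i then 1 else 0)) :=
          Finset.sum_le_sum (fun t _ => hstep t)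
      _ = (∑ t, (Nat.digits b (l.sum t)).sum) + 1 := by
          rw [Finset.sum_add_distrib, Finset.sum_ite_eq' Finset.univ i (fun _ => 1)]
          simp
      _ ≤ Multiset.card l + 1 := by omega

/-- **Place notation gives exponential expansion.**
For `A_n` and an integer `b ≥ 2`, the macro set `M = { b^j · a_i : 1 ≤ i ≤ n, j ≥ 1 }`
has logarithmic density (`|M ∩ B_G(r)| = n⌊log_b r⌋` for `r ≥ 1`), and for every `s ≥ 1`,
`b^{s/(n(b-1)) - 1} ≤ f_{G'}(s) ≤ n·b · b^{s/(n(b-1))}`. -/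
theorem place_notation_exponential_expansion
    (n b : ℕ) (hn : 1 ≤ n) (hb : 2 ≤ b)
    (M : Set (Fin n → ℕ))
    (hM : M = {w | ∃ i : Fin n, ∃ j : ℕ, 1 ≤ j ∧ w = fun t => if t = i then b ^ j else 0}) :
    (∀ r : ℕ, 1 ≤ r → (M ∩ {w | glen w ≤ r}).ncard = n * Nat.log b r) ∧
    (∀ s : ℕ, 1 ≤ s →
      ENNReal.ofReal ((b : ℝ) ^ ((s : ℝ) / ((n : ℝ) * ((b : ℝ) - 1)) - 1))
          ≤ expansion (gens n ∪ M) s ∧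
      expansion (gens n ∪ M) s
          ≤ ENNReal.ofReal ((n : ℝ) * (b : ℝ) * (b : ℝ) ^ ((s : ℝ) / ((n : ℝ) * ((b : ℝ) - 1))))) := by
  have hb1 : 1 < b := by omega
  set D : ℕ := n * (b - 1) with hD
  have hD1 : 1 ≤ D := by
    have : 1 ≤ b - 1 := by omega
    calc 1 = 1 * 1 := by ring
      _ ≤ n * (b - 1) := Nat.mul_le_mul hn this
  have hDcast : ((D : ℕ) : ℝ) = (n : ℝ) * ((b : ℝ) - 1) := by
    rw [hD]
    push_cast [Nat.cast_sub (by omega : 1 ≤ b)]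
    ring
  have hDpos : (0 : ℝ) < (n : ℝ) * ((b : ℝ) - 1) := by
    rw [← hDcast]
    exact_mod_cast hD1
  constructor
  · -- density
    intro r hr
    set Lg := Nat.log b r with hLg
    set F : Finset (Fin n → ℕ) :=
      (Finset.univ ×ˢ Finset.Icc 1 Lg).image
        (fun p => fun t => if t = p.1 then b ^ p.2 else 0) with hF
    have hglen : ∀ (i : Fin n) (j : ℕ),
        glen (fun t => if t = i then b ^ j else 0) = b ^ j := by
      intro i j
      rw [glen, Finset.sum_ite_eq' Finset.univ i (fun _ => b ^ j)]
      simp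
    have hset : M ∩ {w | glen w ≤ r} = ↑F := by
      ext w
      constructor
      · rintro ⟨hwM, hwr⟩
        rw [hM] at hwM
        obtain ⟨i, j, hj, rfl⟩ := hwM
        rw [Set.mem_setOf_eq, hglen] at hwr
        have hjLg : j ≤ Lg := by
          rw [hLg]
          exact (Nat.le_log_iff_pow_le hb1 (by omega)).mpr hwr
        refine Finset.mem_coe.mpr (Finset.mem_image.mpr ⟨(i, j), ?_, rfl⟩)
        simp [Finset.mem_Icc, hj, hjLg]
      · intro hw
        obtain ⟨⟨i, j⟩, hp, rfl⟩ := Finset.mem_image.mp (Finset.mem_coe.mp hw)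
        simp only [Finset.mem_product, Finset.mem_Icc] at hp
        constructor
        · rw [hM]; exact ⟨i, j, hp.2.1, rfl⟩
        · rw [Set.mem_setOf_eq, hglen]
          exact (Nat.le_log_iff_pow_le hb1 (by omega)).mp hp.2.2
    rw [hset, Set.ncard_coe_finset, hF]
    rw [Finset.card_image_of_injOn, Finset.card_product, Finset.card_univ,
      Fintype.card_fin, Nat.card_Icc]
    · simp
    · rintro ⟨i, j⟩ hij ⟨i', j'⟩ hij' h
      have h1 : (if i = i then b ^ j else 0) = (if i = i' then b ^ j' else 0) := congrFun h i
      rw [if_pos rfl] at h1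
      have hbj : 0 < b ^ j := Nat.pow_pos (by omega)
      by_cases hii : i = i'
      · subst hii
        rw [if_pos rfl] at h1
        have : j = j' := Nat.pow_right_injective hb h1
        simp [this]
      · rw [if_neg hii] at h1
        omega
  · -- expansion bounds
    intro s hs
    set q : ℕ := s / D with hq
    have hDq : D * q ≤ s := by
      rw [hq, mul_comm]; exact Nat.div_mul_le_self s D
    have hsDq : s < D * q + D := by
      have h1 := Nat.div_add_mod s D
      have h2 := Nat.mod_lt s (show 0 < D by omega)
      rw [← hq] at h1
      omega
    constructor
    · -- lower bound
      have hmem : ((b ^ q : ℕ) : ℝ≥0∞) ∈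
          {x : ℝ≥0∞ | ∃ r : ℕ, x = (r : ℝ≥0∞) ∧
            ∀ w : Fin n → ℕ, glen w ≤ r → slen (gens n ∪ M) w ≤ (s : ℕ∞)} := by
        refine ⟨b ^ q, rfl, fun w hw => ?_⟩
        refine le_trans (slen_le_dsum n b hb M hM w) ?_
        have : (∑ i, (Nat.digits b (w i)).sum) ≤ s := by
          rcases Nat.eq_zero_or_pos q with h0 | h0
          · calc (∑ i, (Nat.digits b (w i)).sum) ≤ ∑ i, w i :=
                Finset.sum_le_sum (fun i _ => dsum_le_self b hb (w i))
              _ = glen w := rfl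
              _ ≤ b ^ q := hw
              _ ≤ s := by rw [h0]; simpa using hs
          · have hwi : ∀ i : Fin n, w i ≤ b ^ q := by
              intro i
              calc w i ≤ ∑ t, w t :=
                  Finset.single_le_sum (fun t _ => Nat.zero_le _) (Finset.mem_univ i)
                _ ≤ b ^ q := hw
            calc (∑ i, (Nat.digits b (w i)).sum) ≤ ∑ _i : Fin n, (b - 1) * q :=
                Finset.sum_le_sum (fun i _ => dsum_le_of_le_pow b hb q (w i) h0 (hwi i))
              _ = n * ((b - 1) * q) := by
                  rw [Finset.sum_const, Finset.card_univ, Fintype.card_fin, smul_eq_mul]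
              _ = D * q := by rw [hD]; ring
              _ ≤ s := hDq
        exact_mod_cast this
      refine le_trans ?_ (le_sSup hmem)
      rw [← ENNReal.ofReal_natCast (b ^ q)]
      apply ENNReal.ofReal_le_ofReal
      have hexp : (s : ℝ) / ((n : ℝ) * ((b : ℝ) - 1)) - 1 ≤ (q : ℝ) := by
        rw [sub_le_iff_le_add, div_le_iff₀ hDpos, ← hDcast]
        have : (s : ℝ) ≤ ((D * q + D : ℕ) : ℝ) := by exact_mod_cast le_of_lt hsDq
        push_cast at this ⊢
        nlinarith
      calc (b : ℝ) ^ ((s : ℝ) / ((n : ℝ) * ((b : ℝ) - 1)) - 1)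
          ≤ (b : ℝ) ^ ((q : ℕ) : ℝ) :=
            Real.rpow_le_rpow_of_exponent_le (by exact_mod_cast hb1.le) hexp
        _ = ((b ^ q : ℕ) : ℝ) := by
            rw [Real.rpow_natCast]; push_cast; ring
    · -- upper bound
      apply sSup_le
      rintro x ⟨r, rfl, hr⟩
      set m : ℕ := q + 1 with hm
      set w : Fin n → ℕ := fun _ => b ^ m - 1 with hw
      have hglenw : glen w = n * (b ^ m - 1) := by
        rw [glen, hw, Finset.sum_const, Finset.card_univ, Fintype.card_fin, smul_eq_mul]
      have hslenw : ¬ (slen (gens n ∪ M) w ≤ (s : ℕ∞)) := by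
        intro hcon
        have hlow := dsum_le_slen n b hb M hM w
        have h1 : ((∑ i, (Nat.digits b (w i)).sum : ℕ) : ℕ∞) ≤ (s : ℕ∞) :=
          le_trans hlow hcon
        have h2 : (∑ i, (Nat.digits b (w i)).sum) ≤ s := by exact_mod_cast h1
        have h3 : (∑ i : Fin n, (Nat.digits b (w i)).sum) = D * m := by
          rw [hw]
          simp only [dsum_pred_pow b hb m]
          rw [Finset.sum_const, Finset.card_univ, Fintype.card_fin, smul_eq_mul, hD]
          ring
        rw [h3, hm] at h2
        have : D * (q + 1) = D * q + D := by ring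
        omega
      have hrlt : r < glen w := by
        by_contra hcon
        exact hslenw (hr w (by omega))
      have hrle : r ≤ n * b ^ m := by
        have : b ^ m - 1 ≤ b ^ m := Nat.sub_le _ _
        have := Nat.mul_le_mul_left n this
        omega
      calc (r : ℝ≥0∞) ≤ ((n * b ^ m : ℕ) : ℝ≥0∞) := by exact_mod_cast hrle
        _ = ENNReal.ofReal ((n * b ^ m : ℕ) : ℝ) := (ENNReal.ofReal_natCast _).symm
        _ ≤ ENNReal.ofReal ((n : ℝ) * (b : ℝ) * (b : ℝ) ^ ((s : ℝ) / ((n : ℝ) * ((b : ℝ) - 1)))) := by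
            apply ENNReal.ofReal_le_ofReal
            have hq_le : ((q : ℕ) : ℝ) ≤ (s : ℝ) / ((n : ℝ) * ((b : ℝ) - 1)) := by
              rw [le_div_iff₀ hDpos, ← hDcast]
              have : ((D * q : ℕ) : ℝ) ≤ (s : ℝ) := by exact_mod_cast hDq
              push_cast at this ⊢
              nlinarith
            have hpow : (b : ℝ) ^ ((q : ℕ) : ℝ) ≤
                (b : ℝ) ^ ((s : ℝ) / ((n : ℝ) * ((b : ℝ) - 1))) :=
              Real.rpow_le_rpow_of_exponent_le (by exact_mod_cast hb1.le) hq_le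
            rw [Real.rpow_natCast] at hpow
            have hbm : ((n * b ^ m : ℕ) : ℝ) = (n : ℝ) * (b : ℝ) * (b : ℝ) ^ q := by
              push_cast
              rw [hm]
              ring
            rw [hbm]
            have hnb : (0 : ℝ) ≤ (n : ℝ) * (b : ℝ) := by positivity
            nlinarith [pow_pos (show (0:ℝ) < b by positivity) q]
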